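/- (Minimum–maximum property) Let W : ℝ^B → ℝ, W(x) = Σ_{j∈J} S_j(x), be a finite sum of C² functions on a finite-dimensional space satisfying the twist condition ∂²W/∂x_i∂x_k ≤ 0 for all i ≠ k. If x and y both minimize W, then min{x,y} (componentwise) and max{x,y} also minimize W; in particular W(x) + W(y) ≥ W(max{x,y}) + W(min{x,y}) for all x, y. -/

import Mathlib

open scoped BigOperators

private lemma aux_single {ι : Type*} [Fintype ι] [DecidableEq ι] (v : ι → ℝ) :
    v = ∑ i, v i • (Pi.single i (1 : ℝ) : ι → ℝ) := by
  ext j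
  simp [Pi.single_apply, Finset.sum_apply, mul_comm]

private lemma aux_secderiv_nonpos {ι : Type*} [Fintype ι] [DecidableEq ι]
    (W : (ι → ℝ) → ℝ)
    (ht : ∀ (z : ι → ℝ) (i k : ι), i ≠ k →
      fderiv ℝ (fderiv ℝ W) z (Pi.single i 1) (Pi.single k 1) ≤ 0)
    (α β : ι → ℝ) (hα : ∀ i, 0 ≤ α i) (hβ : ∀ i, 0 ≤ β i)
    (hdisj : ∀ i, α i * β i = 0) (z : ι → ℝ) :
    fderiv ℝ (fderiv ℝ W) z β α ≤ 0 := by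
  set A := fderiv ℝ (fderiv ℝ W) z with hA
  have h1 : A β α = ∑ k, β k * (A (Pi.single k 1) α) := by
    conv_lhs => rw [aux_single β]
    rw [map_sum]
    simp [ContinuousLinearMap.sum_apply, smul_eq_mul]
  have h2 : ∀ k, A (Pi.single k 1) α
      = ∑ i, α i * (A (Pi.single k 1) (Pi.single i 1)) := by
    intro k
    conv_lhs => rw [aux_single α]
    simp [smul_eq_mul]
  rw [h1]
  apply Finset.sum_nonpos
  intro k _
  rw [h2]
  rw [Finset.mul_sum]
  apply Finset.sum_nonpos
  intro i _
  rcases eq_or_ne k i with rfl | hki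
  · rcases mul_eq_zero.mp (hdisj k) with h | h <;> simp [h]
  · have := ht z k i hki
    have h3 : 0 ≤ β k * α i := mul_nonneg (hβ k) (hα i)
    nlinarith

private lemma aux_core {ι : Type*} [Fintype ι] [DecidableEq ι]
    (W : (ι → ℝ) → ℝ)
    (hW1 : Differentiable ℝ W) (hW2d : Differentiable ℝ (fderiv ℝ W))
    (ht : ∀ (z : ι → ℝ) (i k : ι), i ≠ k →
      fderiv ℝ (fderiv ℝ W) z (Pi.single i 1) (Pi.single k 1) ≤ 0)
    (m α β : ι → ℝ) (hα : ∀ i, 0 ≤ α i) (hβ : ∀ i, 0 ≤ β i)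
    (hdisj : ∀ i, α i * β i = 0) :
    W (m + α + β) + W m ≤ W (m + α) + W (m + β) := by
  have hAneg : ∀ z : ι → ℝ, fderiv ℝ (fderiv ℝ W) z β α ≤ 0 :=
    aux_secderiv_nonpos W ht α β hα hβ hdisj
  -- curve derivative helpers
  have hcurve : ∀ (v w : ι → ℝ) (s : ℝ),
      HasDerivAt (fun s : ℝ => v + s • w) w s := by
    intro v w s
    simpa using ((hasDerivAt_id s).smul_const w).const_add v
  -- Step B : for fixed t, s ↦ fderiv W (m + t•α + s•β) α is antitone
  have stepB : ∀ t : ℝ,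
      fderiv ℝ W (m + t • α + β) α ≤ fderiv ℝ W (m + t • α) α := by
    intro t
    set u : ℝ → ℝ := fun s => fderiv ℝ W (m + t • α + s • β) α with hu
    have hud : ∀ s : ℝ, HasDerivAt u
        (fderiv ℝ (fderiv ℝ W) (m + t • α + s • β) β α) s := by
      intro s
      have h1 : HasDerivAt (fun s : ℝ => fderiv ℝ W (m + t • α + s • β))
          (fderiv ℝ (fderiv ℝ W) (m + t • α + s • β) β) s :=
        (hW2d _).hasFDerivAt.comp_hasDerivAt s (hcurve (m + t • α) β s)
      simpa using h1.clm_apply (hasDerivAt_const s α)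
    have hanti : Antitone u := by
      apply antitone_of_deriv_nonpos
      · exact fun s => (hud s).differentiableAt
      · intro s
        rw [(hud s).deriv]
        exact hAneg _
    have := hanti (show (0:ℝ) ≤ 1 by norm_num)
    simpa [hu] using this
  -- Step C : t ↦ W (m + t•α + β) - W (m + t•α) is antitone
  set g : ℝ → ℝ := fun t => W (m + t • α + β) - W (m + t • α) with hg
  have hgd : ∀ t : ℝ, HasDerivAt g
      (fderiv ℝ W (m + t • α + β) α - fderiv ℝ W (m + t • α) α) t := by
    intro t
    have h1 : HasDerivAt (fun t : ℝ => W (m + t • α + β))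
        (fderiv ℝ W (m + t • α + β) α) t := by
      have hc : HasDerivAt (fun t : ℝ => m + t • α + β) α t := by
        simpa [add_right_comm] using hcurve (m + β) α t
      exact (hW1 _).hasFDerivAt.comp_hasDerivAt t hc
    have h2 : HasDerivAt (fun t : ℝ => W (m + t • α))
        (fderiv ℝ W (m + t • α) α) t :=
      (hW1 _).hasFDerivAt.comp_hasDerivAt t (hcurve m α t)
    exact h1.sub h2
  have hganti : Antitone g := by
    apply antitone_of_deriv_nonpos
    · exact fun t => (hgd t).differentiableAt
    · intro t
      rw [(hgd t).deriv]
      have := stepB t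
      linarith
  have := hganti (show (0:ℝ) ≤ 1 by norm_num)
  simp only [hg, one_smul, zero_smul, add_zero] at this
  linarith

theorem stmt9 {ι κ : Type*} [Fintype ι] [DecidableEq ι] (J : Finset κ) (S : κ → (ι → ℝ) → ℝ)
    (hS : ∀ j ∈ J, ContDiff ℝ 2 (S j))
    (W : (ι → ℝ) → ℝ) (hW : W = fun x => ∑ j ∈ J, S j x)
    (htwist : ∀ (x : ι → ℝ) (i k : ι), i ≠ k →
      iteratedFDeriv ℝ 2 W x ![Pi.single i 1, Pi.single k 1] ≤ 0) :
    (∀ x y : ι → ℝ, W (x ⊔ y) + W (x ⊓ y) ≤ W x + W y) ∧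
    (∀ x y : ι → ℝ, (∀ z, W x ≤ W z) → (∀ z, W y ≤ W z) →
      (∀ z, W (x ⊓ y) ≤ W z) ∧ (∀ z, W (x ⊔ y) ≤ W z)) := by
  have hWC : ContDiff ℝ 2 W := by
    rw [hW]; exact ContDiff.sum fun j hj => hS j hj
  have hW1 : Differentiable ℝ W := hWC.differentiable (by norm_num)
  have hW2 : ContDiff ℝ 1 (fderiv ℝ W) := hWC.fderiv_right (by norm_num)
  have hW2d : Differentiable ℝ (fderiv ℝ W) := hW2.differentiable (by norm_num)
  have ht : ∀ (z : ι → ℝ) (i k : ι), i ≠ k →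
      fderiv ℝ (fderiv ℝ W) z (Pi.single i 1) (Pi.single k 1) ≤ 0 := by
    intro z i k hik
    have := htwist z i k hik
    rwa [iteratedFDeriv_two_apply] at this
  have main : ∀ x y : ι → ℝ, W (x ⊔ y) + W (x ⊓ y) ≤ W x + W y := by
    intro x y
    set m := x ⊓ y with hm
    set α := x - m with hαdef
    set β := y - m with hβdef
    have hα : ∀ i, 0 ≤ α i := by
      intro i
      simp [hαdef, hm, Pi.inf_apply, sub_nonneg, inf_le_left]
    have hβ : ∀ i, 0 ≤ β i := by
      intro i
      simp [hβdef, hm, Pi.inf_apply, sub_nonneg, inf_le_right]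
    have hdisj : ∀ i, α i * β i = 0 := by
      intro i
      rcases le_total (x i) (y i) with h | h
      · have : α i = 0 := by
          simp [hαdef, hm, Pi.inf_apply, inf_eq_left.mpr h]
        rw [this, zero_mul]
      · have : β i = 0 := by
          simp [hβdef, hm, Pi.inf_apply, inf_eq_right.mpr h]
        rw [this, mul_zero]
    have hx : m + α = x := by ext i; simp [hαdef]
    have hy : m + β = y := by ext i; simp [hβdef]
    have hsup : m + α + β = x ⊔ y := by
      ext i
      have h1 : x i ⊓ y i + x i ⊔ y i = x i + y i := inf_add_sup _ _
      simp only [hαdef, hβdef, hm, Pi.add_apply, Pi.sub_apply, Pi.inf_apply,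
        Pi.sup_apply]
      linarith
    have := aux_core W hW1 hW2d ht m α β hα hβ hdisj
    rw [hsup, hx, hy] at this
    linarith
  refine ⟨main, ?_⟩
  intro x y hx hy
  have h1 := main x y
  have h2 := hx (x ⊓ y)
  have h3 := hy (x ⊔ y)
  constructor
  · intro z
    have := hx z
    linarith
  · intro z
    have := hy z
    linarith
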